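/- The functions $u(t) = -\log(1 - e^{-t})$ and $s(t) = \frac{t}{1 - e^{-t}} - 1$ on $(0, +\infty)$ satisfy the ODE system: (1) $\left(s + \frac{(s')^2}{u''s - s''}\right)e^{u - t} = 1$ and (2) $s' - s u' = 1$; moreover $s(t) \geq 0$, $u''(t)s(t) - s''(t) > 0$ for all $t > 0$, and $\lim_{t\to+\infty} u(t) = 0$. -/

import Mathlib

open Real Filter

noncomputable def U1 (x : ℝ) : ℝ := -(Real.exp (-x) / (1 - Real.exp (-x)))
noncomputable def S1 (x : ℝ) : ℝ :=
  (1 * (1 - Real.exp (-x)) - x * Real.exp (-x)) / (1 - Real.exp (-x)) ^ 2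

lemma aux_d_pos {t : ℝ} (ht : 0 < t) : 0 < 1 - Real.exp (-t) := by
  have : Real.exp (-t) < 1 := by rw [Real.exp_lt_one_iff]; linarith
  linarith

lemma aux_exp (t : ℝ) : HasDerivAt (fun x => Real.exp (-x)) (-Real.exp (-t)) t := by
  simpa [Function.comp_def] using (Real.hasDerivAt_exp (-t)).comp t (hasDerivAt_neg t)

lemma aux_d (t : ℝ) : HasDerivAt (fun x => 1 - Real.exp (-x)) (Real.exp (-t)) t := by
  simpa [Pi.sub_def] using (hasDerivAt_const t (1:ℝ)).sub (aux_exp t)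

lemma hasDerivAt_u1 {t : ℝ} (ht : 0 < t) :
    HasDerivAt (fun x => -Real.log (1 - Real.exp (-x))) (U1 t) t :=
  ((aux_d t).log (aux_d_pos ht).ne').neg

lemma hasDerivAt_s1 {t : ℝ} (ht : 0 < t) :
    HasDerivAt (fun x => x / (1 - Real.exp (-x)) - 1) (S1 t) t := by
  simpa [S1] using ((hasDerivAt_id t).div (aux_d t) (aux_d_pos ht).ne').sub_const 1

lemma hasDerivAt_U1 {t : ℝ} (ht : 0 < t) :
    HasDerivAt U1 (Real.exp (-t) / (1 - Real.exp (-t)) ^ 2) t := by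
  have hd := (aux_d_pos ht).ne'
  have h := ((aux_exp t).div (aux_d t) hd).neg
  refine h.congr_deriv (Eq.symm ?_)
  field_simp
  ring

lemma hasDerivAt_S1 {t : ℝ} (ht : 0 < t) :
    HasDerivAt S1
      ((t * Real.exp (-t) * (1 - Real.exp (-t)) ^ 2 -
          (1 * (1 - Real.exp (-t)) - t * Real.exp (-t)) *
            (2 * (1 - Real.exp (-t)) * Real.exp (-t))) /
        ((1 - Real.exp (-t)) ^ 2) ^ 2) t := by
  have hd := (aux_d_pos ht).ne'
  have hN : HasDerivAt (fun x => 1 * (1 - Real.exp (-x)) - x * Real.exp (-x))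
      (t * Real.exp (-t)) t := by
    have h := ((hasDerivAt_const t (1:ℝ)).mul (aux_d t)).sub
      ((hasDerivAt_id t).mul (aux_exp t))
    refine h.congr_deriv (Eq.symm ?_)
    simp [id]
  have hD : HasDerivAt (fun x => (1 - Real.exp (-x)) ^ 2)
      (2 * (1 - Real.exp (-t)) * Real.exp (-t)) t := by
    have h := (aux_d t).pow 2
    refine h.congr_deriv (Eq.symm ?_)
    ring
  exact hN.div hD (pow_ne_zero 2 hd)

theorem stmt_7 (u s : ℝ → ℝ)
    (hu : ∀ t, u t = -Real.log (1 - Real.exp (-t)))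
    (hs : ∀ t, s t = t / (1 - Real.exp (-t)) - 1) :
    (∀ t > (0 : ℝ),
      (s t + (deriv s t) ^ 2 / (deriv (deriv u) t * s t - deriv (deriv s) t)) *
          Real.exp (u t - t) = 1 ∧
      deriv s t - s t * deriv u t = 1 ∧
      0 ≤ s t ∧
      0 < deriv (deriv u) t * s t - deriv (deriv s) t) ∧
    Filter.Tendsto u Filter.atTop (nhds 0) := by
  have hufun : u = fun x => -Real.log (1 - Real.exp (-x)) := funext hu
  have hsfun : s = fun x => x / (1 - Real.exp (-x)) - 1 := funext hs
  have hderiv_u : ∀ x : ℝ, 0 < x → deriv u x = U1 x := by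
    intro x hx
    rw [hufun]
    exact (hasDerivAt_u1 hx).deriv
  have hderiv_s : ∀ x : ℝ, 0 < x → deriv s x = S1 x := by
    intro x hx
    rw [hsfun]
    exact (hasDerivAt_s1 hx).deriv
  constructor
  · intro t ht
    have hE : (0:ℝ) < Real.exp (-t) := Real.exp_pos _
    have hd : (0:ℝ) < 1 - Real.exp (-t) := aux_d_pos ht
    have h1 : Real.exp (-t) * (1 + t) < 1 := by
      have h2 : (1:ℝ) + t < Real.exp t := by
        have := Real.add_one_lt_exp (ne_of_gt ht); linarith
      calc Real.exp (-t) * (1 + t) < Real.exp (-t) * Real.exp t :=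
            mul_lt_mul_of_pos_left h2 hE
        _ = 1 := by rw [← Real.exp_add]; simp
    have hdu : deriv u t = U1 t := hderiv_u t ht
    have hds : deriv s t = S1 t := hderiv_s t ht
    have hequ : deriv u =ᶠ[nhds t] U1 := by
      filter_upwards [Ioi_mem_nhds ht] with x hx using hderiv_u x hx
    have heqs : deriv s =ᶠ[nhds t] S1 := by
      filter_upwards [Ioi_mem_nhds ht] with x hx using hderiv_s x hx
    have hdu2 : deriv (deriv u) t = Real.exp (-t) / (1 - Real.exp (-t)) ^ 2 := by
      rw [hequ.deriv_eq]
      exact (hasDerivAt_U1 ht).deriv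
    have hds2 : deriv (deriv s) t =
        (t * Real.exp (-t) * (1 - Real.exp (-t)) ^ 2 -
          (1 * (1 - Real.exp (-t)) - t * Real.exp (-t)) *
            (2 * (1 - Real.exp (-t)) * Real.exp (-t))) /
        ((1 - Real.exp (-t)) ^ 2) ^ 2 := by
      rw [heqs.deriv_eq]
      exact (hasDerivAt_S1 ht).deriv
    have hkey : deriv (deriv u) t * s t - deriv (deriv s) t =
        Real.exp (-t) * (1 - Real.exp (-t) - t * Real.exp (-t)) /
          (1 - Real.exp (-t)) ^ 3 := by
      rw [hdu2, hds2, hs t]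
      field_simp
      ring
    have hnum : (0:ℝ) < 1 - Real.exp (-t) - t * Real.exp (-t) := by nlinarith
    have hpos : 0 < deriv (deriv u) t * s t - deriv (deriv s) t := by
      rw [hkey]
      positivity
    refine ⟨?_, ?_, ?_, hpos⟩
    · have hexpu : Real.exp (u t - t) = Real.exp (-t) / (1 - Real.exp (-t)) := by
        rw [hu t, show -Real.log (1 - Real.exp (-t)) - t
            = (-t) - Real.log (1 - Real.exp (-t)) by ring,
          Real.exp_sub, Real.exp_log hd]
      rw [hexpu, hds, hkey, hs t, S1]
      field_simp
      ring
    · rw [hds, hdu, hs t, S1, U1]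
      field_simp
      ring
    · rw [hs t]
      have : (1:ℝ) ≤ t / (1 - Real.exp (-t)) := by
        rw [one_le_div hd]
        have := Real.add_one_le_exp (-t)
        linarith
      linarith
  · have h1 : Tendsto (fun t : ℝ => Real.exp (-t)) atTop (nhds 0) :=
      Real.tendsto_exp_atBot.comp tendsto_neg_atTop_atBot
    have h2 : Tendsto (fun t : ℝ => 1 - Real.exp (-t)) atTop (nhds 1) := by
      simpa using tendsto_const_nhds.sub h1
    have h3 : Tendsto (fun t : ℝ => Real.log (1 - Real.exp (-t))) atTop (nhds 0) := by
      have := (Real.continuousAt_log (by norm_num : (1:ℝ) ≠ 0)).tendsto.comp h2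
      simpa [Function.comp_def] using this
    rw [hufun]
    simpa using h3.neg
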